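/- Let $\alpha \in (0,1)$ and let $f \in C^{0,\alpha}(\bar G_r)$ with $f(y',0) = 0$. Define $F(y',t) = \int_0^t s^{-1} f(y',s)\, ds$. Then for every $\epsilon \in (0,\alpha)$, $F \in C^{0,\epsilon}(\bar G_r)$; that is, there is a slight loss of Hölder regularity in the borderline case $a = -1$. -/

import Mathlib

open Set Metric MeasureTheory intervalIntegral

def Gset (m : ℕ) (r : ℝ) : Set (EuclideanSpace ℝ (Fin m) × ℝ) :=
  (Metric.ball (0 : EuclideanSpace ℝ (Fin m)) r) ×ˢ (Set.Ioo (0 : ℝ) r)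

lemma aux_holder_dist_le {X Y : Type*} [PseudoMetricSpace X] [PseudoMetricSpace Y]
    {C ρ : NNReal} {f : X → Y} {s : Set X} (h : HolderOnWith C ρ f s)
    {x y : X} (hx : x ∈ s) (hy : y ∈ s) :
    dist (f x) (f y) ≤ C * dist x y ^ (ρ : ℝ) := by
  have h1 := h.edist_le hx hy
  rw [edist_dist, edist_dist, ENNReal.ofReal_rpow_of_nonneg dist_nonneg ρ.coe_nonneg,
    ← ENNReal.ofReal_coe_nnreal, ← ENNReal.ofReal_mul C.coe_nonneg] at h1
  exact (ENNReal.ofReal_le_ofReal_iff (by positivity)).1 h1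

lemma aux_holder_of_dist_le {X Y : Type*} [PseudoMetricSpace X] [PseudoMetricSpace Y]
    {C ρ : NNReal} {f : X → Y} {s : Set X}
    (h : ∀ x ∈ s, ∀ y ∈ s, dist (f x) (f y) ≤ C * dist x y ^ (ρ : ℝ)) :
    HolderOnWith C ρ f s := by
  intro x hx y hy
  rw [edist_dist, edist_dist, ENNReal.ofReal_rpow_of_nonneg dist_nonneg ρ.coe_nonneg,
    ← ENNReal.ofReal_coe_nnreal, ← ENNReal.ofReal_mul C.coe_nonneg]
  exact ENNReal.ofReal_le_ofReal (h x hx y hy)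

lemma aux_log_le {β x : ℝ} (hβ : 0 < β) (hx : 0 < x) : Real.log x ≤ x ^ β / β := by
  have h := Real.log_le_sub_one_of_pos (Real.rpow_pos_of_pos hx β)
  rw [Real.log_rpow hx] at h
  rw [le_div_iff₀ hβ]
  nlinarith

lemma aux_rpow_sub {t u p : ℝ} (ht : 0 ≤ t) (htu : t ≤ u) (hp0 : 0 ≤ p) (hp1 : p ≤ 1) :
    u ^ p - t ^ p ≤ (u - t) ^ p := by
  have key : (Real.toNNReal u) ^ p ≤ (Real.toNNReal (u - t)) ^ p + (Real.toNNReal t) ^ p := by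
    have : Real.toNNReal u = Real.toNNReal (u - t) + Real.toNNReal t := by
      rw [← Real.toNNReal_add (by linarith) ht, sub_add_cancel]
    rw [this]
    exact NNReal.rpow_add_le_add_rpow _ _ hp0 hp1
  have h2 := NNReal.coe_le_coe.2 key
  push_cast at h2
  rw [Real.coe_toNNReal u (ht.trans htu), Real.coe_toNNReal t ht,
    Real.coe_toNNReal _ (by linarith : (0:ℝ) ≤ u - t)] at h2
  linarith

lemma aux_factor {α ε x M : ℝ} (hα0 : 0 < α) (hε0 : 0 < ε) (hεα : ε < α)
    (hx : 0 ≤ x) (hxM : x ≤ M) : x ^ α ≤ M ^ (α - ε) * x ^ ε := by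
  rcases eq_or_lt_of_le hx with h0 | h0
  · rw [← h0, Real.zero_rpow hα0.ne', Real.zero_rpow hε0.ne', mul_zero]
  · have hx' : x ^ α = x ^ (α - ε) * x ^ ε := by
      rw [← Real.rpow_add h0]; congr 1; ring
    rw [hx']
    exact mul_le_mul_of_nonneg_right (Real.rpow_le_rpow hx hxM (by linarith))
      (Real.rpow_nonneg hx ε)

theorem stmt_2 {m : ℕ} {r α : ℝ} (hr : 0 < r)
    (hα : α ∈ Set.Ioo (0 : ℝ) 1)
    {f : EuclideanSpace ℝ (Fin m) × ℝ → ℝ} {Cf : NNReal}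
    (hf : HolderOnWith Cf ⟨α, le_of_lt hα.1⟩ f (closure (Gset m r)))
    (hzero : ∀ y' ∈ closure (Metric.ball (0 : EuclideanSpace ℝ (Fin m)) r), f (y', 0) = 0) :
    ∀ ε : ℝ, ∀ hε : ε ∈ Set.Ioo (0 : ℝ) α, ∃ C : NNReal,
      HolderOnWith C ⟨ε, le_of_lt hε.1⟩
        (fun p : EuclideanSpace ℝ (Fin m) × ℝ =>
          ∫ s in (0 : ℝ)..p.2, s⁻¹ * f (p.1, s))
        (closure (Gset m r)) := by
  intro ε hε
  have hα0 : 0 < α := hα.1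
  have hα1 : α < 1 := hα.2
  have hε0 : 0 < ε := hε.1
  have hεα : ε < α := hε.2
  have hαε : (0:ℝ) < α - ε := by linarith
  set CB := Metric.closedBall (0 : EuclideanSpace ℝ (Fin m)) r with hCB
  have hcl : closure (Gset m r) = CB ×ˢ (Set.Icc (0:ℝ) r) := by
    rw [Gset, closure_prod_eq, closure_ball _ hr.ne', closure_Ioo hr.ne]
  have hmem : ∀ y' ∈ CB, ∀ s ∈ Set.Icc (0:ℝ) r, (y', s) ∈ closure (Gset m r) := by
    intro y' hy s hs; rw [hcl]; exact Set.mk_mem_prod hy hs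
  have hcoe : ((⟨α, le_of_lt hα.1⟩ : NNReal) : ℝ) = α := rfl
  -- pointwise bound
  have hfb : ∀ y' ∈ CB, ∀ s ∈ Set.Icc (0:ℝ) r, |f (y', s)| ≤ Cf * s ^ α := by
    intro y' hy s hs
    have h := aux_holder_dist_le hf (hmem y' hy s hs) (hmem y' hy 0 ⟨le_refl _, hr.le⟩)
    rw [Real.dist_eq, hzero y' (by rw [closure_ball _ hr.ne']; exact hy), sub_zero] at h
    have hd : dist ((y', s) : EuclideanSpace ℝ (Fin m) × ℝ) ((y', 0)) = s := by
      rw [Prod.dist_eq, dist_self, Real.dist_eq, sub_zero, abs_of_nonneg hs.1,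
        max_eq_right hs.1]
    rw [hd] at h; exact h
  have hfd : ∀ y' ∈ CB, ∀ z' ∈ CB, ∀ s ∈ Set.Icc (0:ℝ) r,
      |f (y', s) - f (z', s)| ≤ Cf * (dist y' z') ^ α := by
    intro y' hy z' hz s hs
    have h := aux_holder_dist_le hf (hmem y' hy s hs) (hmem z' hz s hs)
    rw [Real.dist_eq] at h
    have hd : dist ((y', s) : EuclideanSpace ℝ (Fin m) × ℝ) ((z', s)) = dist y' z' := by
      rw [Prod.dist_eq, dist_self, max_eq_left dist_nonneg]
    rw [hd] at h; exact h
  -- continuity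
  have hfc : ContinuousOn f (closure (Gset m r)) := by
    apply hf.continuousOn
    exact_mod_cast hα0
  have hcont : ∀ y' ∈ CB, ContinuousOn (fun s : ℝ => f (y', s)) (Set.Icc 0 r) := by
    intro y' hy
    apply hfc.comp (Continuous.continuousOn (continuous_const.prodMk continuous_id))
    exact fun s hs => hmem y' hy s hs
  -- integrability
  have hint : ∀ y' ∈ CB, ∀ a b : ℝ, 0 ≤ a → a ≤ b → b ≤ r →
      IntervalIntegrable (fun s => s⁻¹ * f (y', s)) MeasureTheory.volume a b := by
    intro y' hy a b ha hab hb
    have hbound : IntervalIntegrable (fun s => (Cf:ℝ) * s ^ (α - 1))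
        MeasureTheory.volume a b :=
      (intervalIntegral.intervalIntegrable_rpow' (by linarith)).const_mul _
    refine hbound.mono_fun ?_ ?_
    · apply ContinuousOn.aestronglyMeasurable ?_ measurableSet_uIoc
      rw [Set.uIoc_of_le hab]
      apply ContinuousOn.mul
      · exact ContinuousOn.inv₀ continuousOn_id
          (fun s hs => ne_of_gt (lt_of_le_of_lt ha hs.1))
      · exact (hcont y' hy).mono
          (fun s hs => ⟨le_of_lt (lt_of_le_of_lt ha hs.1), hs.2.trans hb⟩)
    · rw [Set.uIoc_of_le hab]
      filter_upwards [MeasureTheory.ae_restrict_mem measurableSet_Ioc] with s hs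
      have hs0 : 0 < s := lt_of_le_of_lt ha hs.1
      have hsr : s ∈ Set.Icc (0:ℝ) r := ⟨hs0.le, hs.2.trans hb⟩
      calc ‖s⁻¹ * f (y', s)‖ = s⁻¹ * |f (y', s)| := by
            rw [Real.norm_eq_abs, abs_mul, abs_inv, abs_of_pos hs0]
        _ ≤ s⁻¹ * ((Cf:ℝ) * s ^ α) :=
            mul_le_mul_of_nonneg_left (hfb y' hy s hsr) (inv_nonneg.2 hs0.le)
        _ = (Cf:ℝ) * s ^ (α - 1) := by
            rw [Real.rpow_sub hs0, Real.rpow_one]; field_simp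
        _ ≤ ‖(Cf:ℝ) * s ^ (α - 1)‖ := by rw [Real.norm_eq_abs]; exact le_abs_self _
  -- tail estimate
  have htail : ∀ z' ∈ CB, ∀ t u : ℝ, 0 ≤ t → t ≤ u → u ≤ r →
      |∫ s in t..u, s⁻¹ * f (z', s)| ≤ (Cf:ℝ) / α * (u - t) ^ α := by
    intro z' hz t u ht htu hu
    have hbound : IntervalIntegrable (fun s => (Cf:ℝ) * s ^ (α - 1))
        MeasureTheory.volume t u :=
      (intervalIntegral.intervalIntegrable_rpow' (by linarith)).const_mul _
    have h1 : ‖∫ s in t..u, s⁻¹ * f (z', s)‖ ≤ |∫ s in t..u, (Cf:ℝ) * s ^ (α - 1)| := by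
      apply intervalIntegral.norm_integral_le_abs_of_norm_le ?_ hbound
      rw [Set.uIoc_of_le htu]
      filter_upwards [MeasureTheory.ae_restrict_mem measurableSet_Ioc] with s hs
      have hs0 : 0 < s := lt_of_le_of_lt ht hs.1
      calc ‖s⁻¹ * f (z', s)‖ = s⁻¹ * |f (z', s)| := by
            rw [Real.norm_eq_abs, abs_mul, abs_inv, abs_of_pos hs0]
        _ ≤ s⁻¹ * ((Cf:ℝ) * s ^ α) :=
            mul_le_mul_of_nonneg_left (hfb z' hz s ⟨hs0.le, hs.2.trans hu⟩)
              (inv_nonneg.2 hs0.le)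
        _ = (Cf:ℝ) * s ^ (α - 1) := by
            rw [Real.rpow_sub hs0, Real.rpow_one]; field_simp
    have h2 : ∫ s in t..u, (Cf:ℝ) * s ^ (α - 1) = (Cf:ℝ) / α * (u ^ α - t ^ α) := by
      rw [intervalIntegral.integral_const_mul, integral_rpow (Or.inl (by linarith))]
      have he : α - 1 + 1 = α := by ring
      rw [he]; ring
    rw [Real.norm_eq_abs, h2] at h1
    have hmono : t ^ α ≤ u ^ α := Real.rpow_le_rpow ht htu hα0.le
    have h3 : |(Cf:ℝ)/α * (u^α - t^α)| = (Cf:ℝ)/α * (u^α - t^α) := by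
      apply abs_of_nonneg
      apply mul_nonneg (div_nonneg Cf.coe_nonneg hα0.le)
      linarith
    rw [h3] at h1
    refine h1.trans ?_
    exact mul_le_mul_of_nonneg_left (aux_rpow_sub ht htu hα0.le hα1.le)
      (div_nonneg Cf.coe_nonneg hα0.le)
  -- first piece estimate
  have hA1 : ∀ y' ∈ CB, ∀ z' ∈ CB, ∀ T : ℝ, 0 ≤ T → T ≤ r →
      |∫ s in (0:ℝ)..T, (s⁻¹ * f (y', s) - s⁻¹ * f (z', s))|
        ≤ 2 * (Cf:ℝ) / α * T ^ α := by
    intro y' hy z' hz T hT hTr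
    have hbound : IntervalIntegrable (fun s => 2 * (Cf:ℝ) * s ^ (α - 1))
        MeasureTheory.volume 0 T :=
      (intervalIntegral.intervalIntegrable_rpow' (by linarith)).const_mul _
    have h1 : ‖∫ s in (0:ℝ)..T, (s⁻¹ * f (y', s) - s⁻¹ * f (z', s))‖
        ≤ |∫ s in (0:ℝ)..T, 2 * (Cf:ℝ) * s ^ (α - 1)| := by
      apply intervalIntegral.norm_integral_le_abs_of_norm_le ?_ hbound
      rw [Set.uIoc_of_le hT]
      filter_upwards [MeasureTheory.ae_restrict_mem measurableSet_Ioc] with s hs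
      have hs0 : 0 < s := hs.1
      have hsr : s ∈ Set.Icc (0:ℝ) r := ⟨hs0.le, hs.2.trans hTr⟩
      calc ‖s⁻¹ * f (y', s) - s⁻¹ * f (z', s)‖
          = s⁻¹ * |f (y', s) - f (z', s)| := by
            rw [← mul_sub, Real.norm_eq_abs, abs_mul, abs_inv, abs_of_pos hs0]
        _ ≤ s⁻¹ * ((Cf:ℝ) * s ^ α + (Cf:ℝ) * s ^ α) := by
            apply mul_le_mul_of_nonneg_left ?_ (inv_nonneg.2 hs0.le)
            calc |f (y', s) - f (z', s)| ≤ |f (y', s)| + |f (z', s)| := abs_sub _ _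
              _ ≤ _ := add_le_add (hfb y' hy s hsr) (hfb z' hz s hsr)
        _ = 2 * (Cf:ℝ) * s ^ (α - 1) := by
            rw [Real.rpow_sub hs0, Real.rpow_one]; field_simp; ring
    have h2 : ∫ s in (0:ℝ)..T, 2 * (Cf:ℝ) * s ^ (α - 1) = 2 * (Cf:ℝ) / α * T ^ α := by
      rw [intervalIntegral.integral_const_mul, integral_rpow (Or.inl (by linarith))]
      have he : α - 1 + 1 = α := by ring
      rw [he, Real.zero_rpow hα0.ne']
      ring
    rw [Real.norm_eq_abs, h2] at h1
    refine h1.trans (le_of_eq (abs_of_nonneg ?_))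
    apply mul_nonneg (div_nonneg (by positivity) hα0.le) (Real.rpow_nonneg hT _)
  -- log piece estimate
  have hA2 : ∀ y' ∈ CB, ∀ z' ∈ CB, ∀ t : ℝ, 0 < dist y' z' → dist y' z' < t → t ≤ r →
      |∫ s in (dist y' z')..t, (s⁻¹ * f (y', s) - s⁻¹ * f (z', s))|
        ≤ (Cf:ℝ) * (r ^ (α - ε) / (α - ε)) * (dist y' z') ^ ε := by
    intro y' hy z' hz t hd0 hdt htr
    set d := dist y' z' with hdd
    have ht0 : 0 < t := hd0.trans hdt
    have hbound : IntervalIntegrable (fun s : ℝ => (Cf:ℝ) * d ^ α * s⁻¹)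
        MeasureTheory.volume d t := by
      apply IntervalIntegrable.const_mul
      apply intervalIntegrable_inv (f := fun x : ℝ => x) ?_ continuousOn_id
      intro x hx
      rw [Set.uIcc_of_le hdt.le] at hx
      exact ne_of_gt (lt_of_lt_of_le hd0 hx.1)
    have h1 : ‖∫ s in d..t, (s⁻¹ * f (y', s) - s⁻¹ * f (z', s))‖
        ≤ |∫ s in d..t, (Cf:ℝ) * d ^ α * s⁻¹| := by
      apply intervalIntegral.norm_integral_le_abs_of_norm_le ?_ hbound
      rw [Set.uIoc_of_le hdt.le]
      filter_upwards [MeasureTheory.ae_restrict_mem measurableSet_Ioc] with s hs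
      have hs0 : 0 < s := hd0.trans hs.1
      have hsr : s ∈ Set.Icc (0:ℝ) r := ⟨hs0.le, hs.2.trans htr⟩
      calc ‖s⁻¹ * f (y', s) - s⁻¹ * f (z', s)‖
          = s⁻¹ * |f (y', s) - f (z', s)| := by
            rw [← mul_sub, Real.norm_eq_abs, abs_mul, abs_inv, abs_of_pos hs0]
        _ ≤ s⁻¹ * ((Cf:ℝ) * d ^ α) :=
            mul_le_mul_of_nonneg_left (hfd y' hy z' hz s hsr) (inv_nonneg.2 hs0.le)
        _ = (Cf:ℝ) * d ^ α * s⁻¹ := by ring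
    have h2 : ∫ s in d..t, (Cf:ℝ) * d ^ α * s⁻¹
        = (Cf:ℝ) * d ^ α * Real.log (t / d) := by
      rw [intervalIntegral.integral_const_mul, integral_inv_of_pos hd0 ht0]
    rw [Real.norm_eq_abs, h2] at h1
    have hcd : (0:ℝ) ≤ (Cf:ℝ) * d ^ α :=
      mul_nonneg Cf.coe_nonneg (Real.rpow_nonneg hd0.le _)
    have hlog : Real.log (t / d) ≤ (t / d) ^ (α - ε) / (α - ε) :=
      aux_log_le hαε (div_pos ht0 hd0)
    have h3 : |(Cf:ℝ) * d ^ α * Real.log (t / d)| = (Cf:ℝ) * d ^ α * Real.log (t / d) := by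
      apply abs_of_nonneg
      apply mul_nonneg hcd
      apply Real.log_nonneg
      rw [le_div_iff₀ hd0]; linarith
    rw [h3] at h1
    refine h1.trans ?_
    have hne : d ^ (α - ε) ≠ 0 := (Real.rpow_pos_of_pos hd0 _).ne'
    have h5 : d ^ α * ((t / d) ^ (α - ε)) = t ^ (α - ε) * d ^ ε := by
      have hda : d ^ α = d ^ ε * d ^ (α - ε) := by
        rw [← Real.rpow_add hd0]; congr 1; ring
      rw [Real.div_rpow ht0.le hd0.le, hda]
      field_simp
    calc (Cf:ℝ) * d ^ α * Real.log (t / d)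
        ≤ (Cf:ℝ) * d ^ α * ((t / d) ^ (α - ε) / (α - ε)) :=
          mul_le_mul_of_nonneg_left hlog hcd
      _ = (Cf:ℝ) * (t ^ (α - ε) / (α - ε)) * d ^ ε := by
          rw [show (Cf:ℝ) * d ^ α * ((t / d) ^ (α - ε) / (α - ε))
              = (Cf:ℝ) / (α - ε) * (d ^ α * ((t / d) ^ (α - ε))) by ring, h5]
          ring
      _ ≤ (Cf:ℝ) * (r ^ (α - ε) / (α - ε)) * d ^ ε := by
          apply mul_le_mul_of_nonneg_right ?_ (Real.rpow_nonneg hd0.le ε)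
          apply mul_le_mul_of_nonneg_left ?_ Cf.coe_nonneg
          exact div_le_div_of_nonneg_right (Real.rpow_le_rpow ht0.le htr hαε.le) hαε.le
  -- assemble
  set F : EuclideanSpace ℝ (Fin m) × ℝ → ℝ :=
    fun p => ∫ s in (0:ℝ)..p.2, s⁻¹ * f (p.1, s) with hF
  set K : ℝ := (Cf:ℝ)/α * r^(α-ε)
      + (2*(Cf:ℝ)/α * (2*r)^(α-ε) + (Cf:ℝ) * (r^(α-ε)/(α-ε))) with hK
  have hc1 : (0:ℝ) ≤ (Cf:ℝ)/α := div_nonneg Cf.coe_nonneg hα0.le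
  have hc2 : (0:ℝ) ≤ 2*(Cf:ℝ)/α := div_nonneg (by positivity) hα0.le
  have hc3 : (0:ℝ) ≤ (2*r)^(α-ε) := Real.rpow_nonneg (by linarith) _
  have hc4 : (0:ℝ) ≤ r^(α-ε) := Real.rpow_nonneg hr.le _
  have hc5 : (0:ℝ) ≤ (Cf:ℝ)*(r^(α-ε)/(α-ε)) :=
    mul_nonneg Cf.coe_nonneg (div_nonneg hc4 hαε.le)
  have hK0 : 0 ≤ K := by
    rw [hK]
    have := mul_nonneg hc1 hc4
    have := mul_nonneg hc2 hc3
    linarith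
  have key : ∀ p ∈ closure (Gset m r), ∀ q ∈ closure (Gset m r), p.2 ≤ q.2 →
      dist (F p) (F q) ≤ K * dist p q ^ ε := by
    rintro ⟨y', t⟩ hp ⟨z', u⟩ hq htu
    rw [hcl] at hp hq
    have hy : y' ∈ CB := hp.1
    have ht0 : (0:ℝ) ≤ t := hp.2.1
    have htr : t ≤ r := hp.2.2
    have hz : z' ∈ CB := hq.1
    have hu0 : (0:ℝ) ≤ u := hq.2.1
    have hur : u ≤ r := hq.2.2
    simp only at htu
    set D := dist ((y', t) : EuclideanSpace ℝ (Fin m) × ℝ) ((z', u)) with hD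
    have hdD : dist y' z' ≤ D := by rw [hD, Prod.dist_eq]; exact le_max_left _ _
    have htuD : u - t ≤ D := by
      rw [hD, Prod.dist_eq]
      refine le_trans ?_ (le_max_right _ _)
      rw [Real.dist_eq, abs_sub_comm]
      exact le_abs_self _
    have hi1 := hint y' hy 0 t (le_refl 0) ht0 htr
    have hi2 := hint z' hz 0 t (le_refl 0) ht0 htr
    have hi3 := hint z' hz t u ht0 htu hur
    have hsplit : F (z', u) = F (z', t) + ∫ s in t..u, s⁻¹ * f (z', s) := by
      simp only [hF]
      rw [← intervalIntegral.integral_add_adjacent_intervals hi2 hi3]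
    have hdist : dist (F (y', t)) (F (z', u)) ≤
        |∫ s in (0:ℝ)..t, (s⁻¹ * f (y', s) - s⁻¹ * f (z', s))|
          + |∫ s in t..u, s⁻¹ * f (z', s)| := by
      have e1 : F (y', t) - (F (z', t) + ∫ s in t..u, s⁻¹ * f (z', s))
          = (∫ s in (0:ℝ)..t, (s⁻¹ * f (y', s) - s⁻¹ * f (z', s)))
            - ∫ s in t..u, s⁻¹ * f (z', s) := by
        rw [intervalIntegral.integral_sub hi1 hi2]
        simp only [hF]
        ring
      rw [Real.dist_eq, hsplit, e1]
      exact abs_sub _ _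
    have hd2r : dist y' z' ≤ 2 * r := by
      have h1 := mem_closedBall.1 hy
      have h2 := mem_closedBall.1 hz
      calc dist y' z' ≤ dist y' 0 + dist 0 z' := dist_triangle _ _ _
        _ ≤ r + r := add_le_add h1 (by rwa [dist_comm])
        _ = 2 * r := by ring
    set d := dist y' z' with hdd
    have hd0 : (0:ℝ) ≤ d := dist_nonneg
    have hA : |∫ s in (0:ℝ)..t, (s⁻¹ * f (y', s) - s⁻¹ * f (z', s))|
        ≤ (2*(Cf:ℝ)/α * (2*r)^(α-ε) + (Cf:ℝ) * (r^(α-ε)/(α-ε))) * d ^ ε := by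
      rcases eq_or_lt_of_le hd0 with h0 | h0
      · have hyz : y' = z' := by
          apply dist_eq_zero.1
          rw [← hdd]
          exact h0.symm
        have hzero' : (∫ s in (0:ℝ)..t, (s⁻¹ * f (y', s) - s⁻¹ * f (z', s))) = 0 := by
          rw [hyz]; simp
        rw [hzero', abs_zero, ← h0, Real.zero_rpow hε0.ne', mul_zero]
      · rcases le_or_gt t d with htd | hdt
        · refine (hA1 y' hy z' hz t ht0 htr).trans ?_
          have h1 : t ^ α ≤ d ^ α := Real.rpow_le_rpow ht0 htd hα0.le
          have h2 : d ^ α ≤ (2*r) ^ (α-ε) * d ^ ε := aux_factor hα0 hε0 hεα hd0 hd2r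
          have hdε : (0:ℝ) ≤ d ^ ε := Real.rpow_nonneg hd0 _
          calc 2*(Cf:ℝ)/α * t ^ α ≤ 2*(Cf:ℝ)/α * ((2*r)^(α-ε) * d ^ ε) :=
                mul_le_mul_of_nonneg_left (h1.trans h2) hc2
            _ ≤ _ := by nlinarith
        · have hi4 := (hint y' hy 0 d (le_refl 0) hd0 (hdt.le.trans htr)).sub
            (hint z' hz 0 d (le_refl 0) hd0 (hdt.le.trans htr))
          have hi5 := (hint y' hy d t hd0 hdt.le htr).sub
            (hint z' hz d t hd0 hdt.le htr)
          rw [← intervalIntegral.integral_add_adjacent_intervals hi4 hi5]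
          refine (abs_add_le _ _).trans ?_
          have hb1 := hA1 y' hy z' hz d hd0 (hdt.le.trans htr)
          have hb2 := hA2 y' hy z' hz t h0 hdt htr
          have h2 : d ^ α ≤ (2*r) ^ (α-ε) * d ^ ε := aux_factor hα0 hε0 hεα hd0 hd2r
          have hb1' : |∫ s in (0:ℝ)..d, (s⁻¹ * f (y', s) - s⁻¹ * f (z', s))|
              ≤ 2*(Cf:ℝ)/α * ((2*r)^(α-ε) * d ^ ε) :=
            hb1.trans (mul_le_mul_of_nonneg_left h2 hc2)
          calc _ ≤ 2*(Cf:ℝ)/α * ((2*r)^(α-ε) * d ^ ε)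
                + (Cf:ℝ) * (r^(α-ε)/(α-ε)) * d ^ ε := add_le_add hb1' hb2
            _ = _ := by ring
    have hB := htail z' hz t u ht0 htu hur
    have hB' : (Cf:ℝ)/α * (u-t)^α ≤ (Cf:ℝ)/α * (r^(α-ε) * (u-t)^ε) :=
      mul_le_mul_of_nonneg_left
        (aux_factor hα0 hε0 hεα (by linarith) (by linarith)) hc1
    have hD0 : (0:ℝ) ≤ D := dist_nonneg
    have hdε : d ^ ε ≤ D ^ ε := Real.rpow_le_rpow hd0 hdD hε0.le
    have hutε : (u-t) ^ ε ≤ D ^ ε := Real.rpow_le_rpow (by linarith) htuD hε0.le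
    have hDε : (0:ℝ) ≤ D ^ ε := Real.rpow_nonneg hD0 _
    refine hdist.trans ?_
    calc |∫ s in (0:ℝ)..t, (s⁻¹ * f (y', s) - s⁻¹ * f (z', s))|
          + |∫ s in t..u, s⁻¹ * f (z', s)|
        ≤ (2*(Cf:ℝ)/α * (2*r)^(α-ε) + (Cf:ℝ) * (r^(α-ε)/(α-ε))) * d ^ ε
          + (Cf:ℝ)/α * (r^(α-ε) * (u-t)^ε) := add_le_add hA (hB.trans hB')
      _ ≤ (2*(Cf:ℝ)/α * (2*r)^(α-ε) + (Cf:ℝ) * (r^(α-ε)/(α-ε))) * D ^ ε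
          + (Cf:ℝ)/α * (r^(α-ε) * D ^ ε) := by
          apply add_le_add
          · apply mul_le_mul_of_nonneg_left hdε
            have := mul_nonneg hc2 hc3
            linarith
          · apply mul_le_mul_of_nonneg_left ?_ hc1
            exact mul_le_mul_of_nonneg_left hutε hc4
      _ = K * D ^ ε := by rw [hK]; ring
  refine ⟨Real.toNNReal K, ?_⟩
  apply aux_holder_of_dist_le
  intro x hx y hy
  have hcoeK : ((Real.toNNReal K : NNReal) : ℝ) = K := Real.coe_toNNReal _ hK0
  rw [hcoeK]
  show dist (F x) (F y) ≤ K * dist x y ^ ε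
  rcases le_total x.2 y.2 with h | h
  · exact key x hx y hy h
  · rw [dist_comm (F x) (F y), dist_comm x y]
    exact key y hy x hx h
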